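/- For the Krawtchouk chain of length N with couplings Jₙ = J√(n(N−n)), n = 1, …, N−1 (zero diagonal), the eigenvalues of the tridiagonal matrix are J(2k − N + 1) for k = 0, 1, …, N−1, i.e., equally spaced with gap 2J. -/

import Mathlib

open Polynomial

noncomputable def kraP (N k : ℕ) : ℝ[X] := (1 + X)^k * (1 - X)^(N - 1 - k)
noncomputable def kraW (N k n : ℕ) : ℝ := (kraP N k).coeff n
noncomputable def kraWm (N k : ℕ) : ℕ → ℝ
  | 0 => 0
  | (m+1) => kraW N k m
noncomputable def kraU (N k n : ℕ) : ℝ := kraW N k n / Real.sqrt (Nat.choose (N-1) n)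

lemma kraW_zero (N k n : ℕ) (hN : 1 ≤ N) (hk : k ≤ N - 1) (hn : N ≤ n) : kraW N k n = 0 := by
  have h1 : (kraP N k).natDegree ≤ k * 1 + (N - 1 - k) * 1 := by
    refine le_trans (natDegree_mul_le) (add_le_add ?_ ?_) <;>
    · refine le_trans (natDegree_pow_le) (Nat.mul_le_mul_left _ ?_)
      first
      | exact le_trans (natDegree_add_le _ _) (by simp)
      | exact le_trans (natDegree_sub_le _ _) (by simp)
  have h2 : (kraP N k).natDegree < n := by
    set d := (kraP N k).natDegree with hd
    clear_value d
    omega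
  exact Polynomial.coeff_eq_zero_of_natDegree_lt h2

lemma kraW_zero' (N k : ℕ) : kraW N k 0 = 1 := by
  simp [kraW, kraP, coeff_zero_eq_eval_zero]

lemma sqrtA (N i : ℕ) (h : i + 1 ≤ N - 1) :
    Real.sqrt (((i:ℝ)+1) * ((N:ℝ)-1-i)) * Real.sqrt (Nat.choose (N-1) i)
      = ((i:ℝ)+1) * Real.sqrt (Nat.choose (N-1) (i+1)) := by
  have hNi : ((N:ℝ)-1-i) = ((N - 1 - i : ℕ) : ℝ) := by
    have h2 : 1 + i ≤ N := by omega
    push_cast [Nat.sub_sub, Nat.cast_sub h2]; ring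
  have hch := congrArg (fun m : ℕ => (m:ℝ)) (Nat.choose_succ_right_eq (N-1) i)
  push_cast at hch
  have e1 : Real.sqrt (((i:ℝ)+1) * ((N:ℝ)-1-i)) * Real.sqrt (Nat.choose (N-1) i)
      = Real.sqrt ((((i:ℝ)+1) * ((N:ℝ)-1-i)) * (Nat.choose (N-1) i)) :=
    (Real.sqrt_mul (by rw [hNi]; positivity) _).symm
  have e2 : ((i:ℝ)+1) * Real.sqrt (Nat.choose (N-1) (i+1))
      = Real.sqrt ((((i:ℝ)+1)^2) * (Nat.choose (N-1) (i+1))) := by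
    rw [Real.sqrt_mul (by positivity), Real.sqrt_sq (by positivity)]
  rw [e1, e2]
  congr 1
  rw [hNi]
  linear_combination (-((i:ℝ)+1)) * hch

lemma sqrtB (N i : ℕ) (h1 : 1 ≤ i) (h2 : i ≤ N - 1) :
    Real.sqrt ((i:ℝ) * ((N:ℝ)-i)) * Real.sqrt (Nat.choose (N-1) i)
      = ((N:ℝ)-i) * Real.sqrt (Nat.choose (N-1) (i-1)) := by
  have hNi : ((N:ℝ)-i) = ((N - i : ℕ) : ℝ) := by
    have h3 : i ≤ N := by omega
    push_cast [Nat.cast_sub h3]; ring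
  have hch : ((Nat.choose (N-1) i : ℕ):ℝ) * i = (Nat.choose (N-1) (i-1) : ℕ) * ((N-i : ℕ):ℝ) := by
    have h4 := Nat.choose_succ_right_eq (N-1) (i-1)
    rw [show i - 1 + 1 = i by omega, show N - 1 - (i-1) = N - i by omega] at h4
    exact_mod_cast congrArg (fun m : ℕ => (m:ℝ)) h4
  have e1 : Real.sqrt ((i:ℝ) * ((N:ℝ)-i)) * Real.sqrt (Nat.choose (N-1) i)
      = Real.sqrt (((i:ℝ) * ((N:ℝ)-i)) * (Nat.choose (N-1) i)) :=
    (Real.sqrt_mul (by rw [hNi]; positivity) _).symm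
  have e2 : ((N:ℝ)-i) * Real.sqrt (Nat.choose (N-1) (i-1))
      = Real.sqrt ((((N:ℝ)-i)^2) * (Nat.choose (N-1) (i-1))) := by
    rw [Real.sqrt_mul (by positivity), Real.sqrt_sq (by rw [hNi]; positivity)]
  rw [e1, e2]
  congr 1
  rw [hNi]
  linear_combination ((N-i : ℕ):ℝ) * hch

lemma hp (a : ℕ) : (1 + X : ℝ[X]) * (C (a:ℝ) * (1+X)^(a-1)) = C (a:ℝ) * (1+X)^a := by
  cases a with
  | zero => simp
  | succ m => simp only [Nat.add_sub_cancel, pow_succ]; push_cast; ring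

lemma hq (b : ℕ) : (1 - X : ℝ[X]) * (C (b:ℝ) * (1-X)^(b-1)) = C (b:ℝ) * (1-X)^b := by
  cases b with
  | zero => simp
  | succ m => simp only [Nat.add_sub_cancel, pow_succ]; push_cast; ring

lemma kode (a b : ℕ) : (1 - X^2 : ℝ[X]) * derivative ((1+X)^a * (1-X)^b) =
    (C ((a:ℝ) - b) - C ((a:ℝ) + b) * X) * ((1+X)^a * (1-X)^b) := by
  rw [derivative_mul, derivative_pow, derivative_pow]
  have h1 := hp a
  have h2 := hq b
  simp only [derivative_add, derivative_one, derivative_X, derivative_sub, zero_add, mul_one,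
    zero_sub, map_sub, map_add]
  linear_combination ((1-X)*(1-X:ℝ[X])^b) * h1 - ((1+X)*(1+X:ℝ[X])^a) * h2

lemma krec (N k : ℕ) (hN : 1 ≤ N) (hk : k ≤ N - 1) (i : ℕ) :
    ((i:ℝ)+1) * kraW N k (i+1) + ((N:ℝ) - i) * kraWm N k i
      = (2*(k:ℝ) - N + 1) * kraW N k i := by
  have E := kode k (N - 1 - k)
  have E' := congrArg (fun p : ℝ[X] => p.coeff i) E
  simp only [sub_mul, one_mul, coeff_sub, mul_assoc, coeff_C_mul, coeff_derivative] at E'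
  -- casts
  have hb : ((N - 1 - k : ℕ) : ℝ) = (N:ℝ) - 1 - k := by
    have h1 : k ≤ N - 1 := hk
    push_cast [Nat.sub_sub, Nat.cast_sub (by omega : 1 + k ≤ N)]
    ring
  rw [hb] at E'
  -- now handle (X^2 * _).coeff i and (X * _).coeff i by cases on i
  match i with
  | 0 =>
    have hx2 : ∀ Q : ℝ[X], (X^2 * Q).coeff 0 = 0 := by
      intro Q; rw [mul_comm, coeff_mul_X_pow']; simp
    have hx1 : ∀ Q : ℝ[X], (X * Q).coeff 0 = 0 := by
      intro Q; simp [mul_coeff_zero]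
    rw [hx2, hx1] at E'
    simp only [kraW, kraWm, kraP]
    push_cast
    push_cast at E'
    linarith [E']
  | 1 =>
    have hx2 : ∀ Q : ℝ[X], (X^2 * Q).coeff 1 = 0 := by
      intro Q; rw [mul_comm, coeff_mul_X_pow']; simp
    have hx1 : ∀ Q : ℝ[X], (X * Q).coeff 1 = Q.coeff 0 := fun Q => coeff_X_mul _ 0
    rw [hx2, hx1] at E'
    simp only [kraW, kraWm, kraP]
    push_cast
    push_cast at E'
    linarith [E']
  | (m+2) =>
    have hx2 : ∀ Q : ℝ[X], (X^2 * Q).coeff (m+2) = Q.coeff m := fun Q => coeff_X_pow_mul _ 2 m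
    have hx1 : ∀ Q : ℝ[X], (X * Q).coeff (m+2) = Q.coeff (m+1) := fun Q => coeff_X_mul _ (m+1)
    rw [hx2, hx1, coeff_derivative] at E'
    simp only [kraW, kraWm, kraP]
    push_cast
    push_cast at E'
    linarith [E']

lemma kra_mulVec (N : ℕ) (hN : 2 ≤ N) (J : ℝ)
    (H : Matrix (Fin N) (Fin N) ℝ)
    (hH : ∀ i j : Fin N, H i j =
      if (i : ℕ) + 1 = (j : ℕ) then J * Real.sqrt (((i : ℕ) + 1) * (N - 1 - (i : ℕ)))
      else if (j : ℕ) + 1 = (i : ℕ) then J * Real.sqrt (((j : ℕ) + 1) * (N - 1 - (j : ℕ)))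
      else 0) (k : ℕ) (hk : k ≤ N - 1) (i : Fin N) :
    (H.mulVec fun j : Fin N => kraU N k j) i
      = (J * (2*(k:ℝ) - (N:ℝ) + 1)) * kraU N k i := by
  have hiN : (i:ℕ) < N := i.isLt
  have hiN' : (i:ℕ) ≤ N - 1 := by omega
  have hs : ∀ n : ℕ, n ≤ N - 1 → (0:ℝ) < Real.sqrt (Nat.choose (N-1) n) := fun n hn =>
    Real.sqrt_pos.mpr (by exact_mod_cast Nat.choose_pos hn)
  -- Step 1 : rewrite as a range sum
  have h1 : (H.mulVec fun j : Fin N => kraU N k j) i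
      = ∑ n ∈ Finset.range N, (if (i:ℕ) + 1 = n then J * Real.sqrt (((i:ℕ) + 1) * ((N:ℝ) - 1 - (i:ℕ)))
          else if n + 1 = (i:ℕ) then J * Real.sqrt (((n:ℝ) + 1) * ((N:ℝ) - 1 - (n:ℕ))) else 0) * kraU N k n := by
    rw [Matrix.mulVec, dotProduct, ← Fin.sum_univ_eq_sum_range]
    exact Finset.sum_congr rfl fun j _ => by rw [hH i j]
  -- Step 2 : extend to range (N+1)
  have hUN : kraU N k N = 0 := by
    simp [kraU, kraW_zero N k N (by omega) hk le_rfl]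
  have h2 : (H.mulVec fun j : Fin N => kraU N k j) i
      = ∑ n ∈ Finset.range (N+1), (if (i:ℕ) + 1 = n then J * Real.sqrt (((i:ℕ) + 1) * ((N:ℝ) - 1 - (i:ℕ)))
          else if n + 1 = (i:ℕ) then J * Real.sqrt (((n:ℝ) + 1) * ((N:ℝ) - 1 - (n:ℕ))) else 0) * kraU N k n := by
    rw [Finset.sum_range_succ, h1, hUN, mul_zero, add_zero]
  -- Step 3 : split the summand
  have h3 : ∀ n ∈ Finset.range (N+1),
      (if (i:ℕ) + 1 = n then J * Real.sqrt (((i:ℕ) + 1) * ((N:ℝ) - 1 - (i:ℕ)))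
          else if n + 1 = (i:ℕ) then J * Real.sqrt (((n:ℝ) + 1) * ((N:ℝ) - 1 - (n:ℕ))) else 0) * kraU N k n
      = (if (i:ℕ) + 1 = n then J * Real.sqrt (((i:ℕ) + 1) * ((N:ℝ) - 1 - (i:ℕ))) * kraU N k n else 0)
        + (if n + 1 = (i:ℕ) then J * Real.sqrt (((n:ℝ) + 1) * ((N:ℝ) - 1 - (n:ℕ))) * kraU N k n else 0) := by
    intro n _
    by_cases hc1 : (i:ℕ) + 1 = n
    · have hc2 : ¬ (n + 1 = (i:ℕ)) := by omega
      simp [hc1, hc2]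
    · by_cases hc2 : n + 1 = (i:ℕ) <;> simp [hc1, hc2, mul_assoc]
  rw [h2, Finset.sum_congr rfl h3, Finset.sum_add_distrib]
  -- Step 4 : evaluate the two sums
  rw [Finset.sum_ite_eq (Finset.range (N+1)) ((i:ℕ)+1)
      (fun n => J * Real.sqrt (((i:ℕ) + 1) * ((N:ℝ) - 1 - (i:ℕ))) * kraU N k n)]
  rw [if_pos (Finset.mem_range.mpr (by omega))]
  -- the lower-neighbour sum
  have h4 : (∑ n ∈ Finset.range (N+1),
      if n + 1 = (i:ℕ) then J * Real.sqrt (((n:ℝ) + 1) * ((N:ℝ) - 1 - (n:ℕ))) * kraU N k n else 0)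
      = J * ((N:ℝ) - (i:ℕ)) * kraWm N k (i:ℕ) / Real.sqrt (Nat.choose (N-1) (i:ℕ)) := by
    rcases hi0 : (i:ℕ) with _ | m
    · rw [Finset.sum_eq_zero (fun n _ => by rw [if_neg (by omega)])]
      simp [kraWm]
    · have hm : ∀ n ∈ Finset.range (N+1),
          (if n + 1 = m + 1 then J * Real.sqrt (((n:ℝ) + 1) * ((N:ℝ) - 1 - (n:ℕ))) * kraU N k n else 0)
          = (if n = m then J * Real.sqrt (((n:ℝ) + 1) * ((N:ℝ) - 1 - (n:ℕ))) * kraU N k n else 0) := by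
        intro n _
        by_cases hc : n = m
        · simp [hc]
        · rw [if_neg (by omega), if_neg hc]
      rw [Finset.sum_congr rfl hm, Finset.sum_ite_eq' (Finset.range (N+1)) m
          (fun n => J * Real.sqrt (((n:ℝ) + 1) * ((N:ℝ) - 1 - (n:ℕ))) * kraU N k n),
        if_pos (Finset.mem_range.mpr (by omega))]
      -- now m = i - 1
      have him : 1 ≤ m + 1 := by omega
      have him2 : m + 1 ≤ N - 1 := by omega
      have hB := sqrtB N (m+1) him him2
      have harg : ((m:ℝ) + 1) * ((N:ℝ) - 1 - (m:ℕ)) = ((m+1:ℕ):ℝ) * ((N:ℝ) - ((m+1:ℕ):ℝ)) := by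
        push_cast; ring
      rw [harg]
      have hsm : (0:ℝ) < Real.sqrt (Nat.choose (N-1) m) := hs m (by omega)
      have hsm1 : (0:ℝ) < Real.sqrt (Nat.choose (N-1) (m+1)) := hs (m+1) (by omega)
      have hwm : kraWm N k (m+1) = kraW N k m := rfl
      rw [hwm]
      simp only [kraU]
      rw [show (m+1) - 1 = m from rfl] at hB
      push_cast at hB
      simp only [kraU] at *
      rw [mul_div_assoc' (J * Real.sqrt (((m+1:ℕ):ℝ) * ((N:ℝ) - ((m+1:ℕ):ℝ)))) _ _,
        div_eq_div_iff (ne_of_gt hsm) (ne_of_gt hsm1)]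
      push_cast
      linear_combination (J * kraW N k m) * hB
  rw [h4]
  -- the upper-neighbour term
  have h5 : J * Real.sqrt (((i:ℕ) + 1) * ((N:ℝ) - 1 - (i:ℕ))) * kraU N k ((i:ℕ)+1)
      = J * (((i:ℕ):ℝ) + 1) * kraW N k ((i:ℕ)+1) / Real.sqrt (Nat.choose (N-1) (i:ℕ)) := by
    rcases eq_or_lt_of_le hiN' with he | hlt
    · -- i = N - 1 : both sides vanish
      have hz : ((N:ℝ) - 1 - (i:ℕ)) = 0 := by
        have hc : ((i:ℕ):ℝ) = ((N-1 : ℕ):ℝ) := by exact_mod_cast congrArg (fun m : ℕ => (m:ℝ)) he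
        rw [hc]; push_cast [Nat.cast_sub (by omega : 1 ≤ N)]; ring
      have hw0 : kraW N k ((i:ℕ)+1) = 0 := kraW_zero N k _ (by omega) hk (by omega)
      rw [hz, hw0, mul_zero, Real.sqrt_zero, mul_zero, zero_mul]
      simp [kraU, hw0]
    · have hA := sqrtA N (i:ℕ) (by omega)
      have hsi : (0:ℝ) < Real.sqrt (Nat.choose (N-1) (i:ℕ)) := hs _ hiN'
      have hsi1 : (0:ℝ) < Real.sqrt (Nat.choose (N-1) ((i:ℕ)+1)) := hs _ (by omega)
      simp only [kraU]
      rw [mul_div_assoc' (J * Real.sqrt ((((i:ℕ):ℝ)+1) * ((N:ℝ) - 1 - ((i:ℕ):ℝ)))) _ _,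
        div_eq_div_iff (ne_of_gt hsi1) (ne_of_gt hsi)]
      linear_combination (J * kraW N k ((i:ℕ)+1)) * hA
  rw [h5]
  -- Step 5 : conclude with the recurrence
  have hrec := krec N k (by omega) hk (i:ℕ)
  simp only [kraU]
  have hsi : (0:ℝ) < Real.sqrt (Nat.choose (N-1) (i:ℕ)) := hs _ hiN'
  rw [← add_div, mul_div_assoc']
  rw [div_eq_div_iff (ne_of_gt hsi) (ne_of_gt hsi)]
  linear_combination (J * Real.sqrt ((Nat.choose (N-1) (i:ℕ) : ℕ))) * hrec


open Matrix

lemma kra_mem_spectrum (N : ℕ) (H : Matrix (Fin N) (Fin N) ℝ) (μ : ℝ) (u : Fin N → ℝ)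
    (hu : u ≠ 0) (h : H.mulVec u = μ • u) : μ ∈ spectrum ℝ H := by
  rw [← AlgEquiv.spectrum_eq (Matrix.toLinAlgEquiv' : Matrix (Fin N) (Fin N) ℝ ≃ₐ[ℝ] _) H,
    ← Module.End.hasEigenvalue_iff_mem_spectrum]
  apply Module.End.hasEigenvalue_of_hasEigenvector (x := u)
  refine ⟨Module.End.mem_eigenspace_iff.mpr ?_, hu⟩
  rw [Matrix.toLinAlgEquiv'_apply, h]

/-- The Krawtchouk chain of length `N` with couplings `Jₙ = J√(n(N−n))` (zero diagonal)
has eigenvalues `J(2k − N + 1)`, `k = 0, …, N−1`: equally spaced with gap `2J`. -/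
theorem stmt10 (N : ℕ) (hN : 2 ≤ N) (J : ℝ) (hJ : 0 < J)
    (H : Matrix (Fin N) (Fin N) ℝ)
    (hH : ∀ i j : Fin N, H i j =
      if (i : ℕ) + 1 = (j : ℕ) then J * Real.sqrt (((i : ℕ) + 1) * (N - 1 - (i : ℕ)))
      else if (j : ℕ) + 1 = (i : ℕ) then J * Real.sqrt (((j : ℕ) + 1) * (N - 1 - (j : ℕ)))
      else 0) :
    spectrum ℝ H = Set.range (fun k : Fin N => J * (2 * (k : ℕ) - N + 1 : ℝ)) := by
  set f : Fin N → ℝ := fun k : Fin N => J * (2 * (k : ℕ) - N + 1 : ℝ) with hf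
  have hherm : H.IsHermitian := by
    ext i j
    simp only [conjTranspose_apply, star_trivial]
    rw [hH i j, hH j i]
    split_ifs <;> first | rfl | omega
  have hinj : Function.Injective f := by
    intro a b hab
    simp only [hf] at hab
    have h2 : (2 * ((a:ℕ):ℝ) - N + 1) = (2 * ((b:ℕ):ℝ) - N + 1) :=
      mul_left_cancel₀ (ne_of_gt hJ) hab
    have : ((a:ℕ):ℝ) = ((b:ℕ):ℝ) := by linarith
    exact Fin.ext (by exact_mod_cast this)
  have hsub : Set.range f ⊆ spectrum ℝ H := by
    rintro x ⟨k, rfl⟩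
    have hk : (k:ℕ) ≤ N - 1 := by omega
    apply kra_mem_spectrum N H _ (fun j : Fin N => kraU N (k:ℕ) j)
    · intro hcon
      have h0 := congrFun hcon ⟨0, by omega⟩
      simp only [Pi.zero_apply] at h0
      simp [kraU, kraW_zero'] at h0
    · funext i
      rw [Pi.smul_apply, smul_eq_mul]
      exact kra_mulVec N hN J H hH (k:ℕ) hk i
  refine (Set.eq_of_subset_of_ncard_le hsub ?_ (H.finite_real_spectrum)).symm
  have hcard1 : (Set.range f).ncard = N := by
    rw [← Set.image_univ, Set.ncard_image_of_injective _ hinj, Set.ncard_univ]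
    simp
  rw [hcard1, hherm.spectrum_real_eq_range_eigenvalues, ← Set.image_univ]
  refine le_trans (Set.ncard_image_le (Set.finite_univ)) ?_
  rw [Set.ncard_univ]
  simp
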